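/- For every real x ≥ 2, ∑_{0 < n ≤ x} r₂(n)² ≤ C·x·log x for some absolute constant C, where r₂(n) is the number of representations of n as an ordered sum of two squares of integers. -/

import Mathlib

open Real

/-- r₂(n): number of pairs (a,b) ∈ ℤ² with a² + b² = n. -/
noncomputable def r2 (n : ℕ) : ℕ := Set.ncard {p : ℤ × ℤ | p.1^2 + p.2^2 = (n : ℤ)}

namespace R2Aux

open Finset Zsqrtd

lemma normi (z : GaussianInt) : z.norm = z.re^2 + z.im^2 := by
  rw [Zsqrtd.norm_def]; ring

lemma abs_le_of_sq_le {a k : ℤ} (h : a^2 ≤ k) : |a| ≤ k := by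
  nlinarith [sq_abs a, abs_nonneg a, sq_nonneg (|a| - 1)]

/-- Box of Gaussian integers with coordinates bounded by `k`. -/
noncomputable def box (k : ℕ) : Finset GaussianInt :=
  ((Finset.Icc (-(k:ℤ)) k) ×ˢ (Finset.Icc (-(k:ℤ)) k)).image fun p => ⟨p.1, p.2⟩

lemma mem_box {k : ℕ} {z : GaussianInt} : z ∈ box k ↔ |z.re| ≤ (k:ℤ) ∧ |z.im| ≤ (k:ℤ) := by
  constructor
  · rintro hz
    simp only [box, Finset.mem_image, Finset.mem_product, Finset.mem_Icc] at hz
    obtain ⟨p, ⟨⟨h1, h2⟩, h3, h4⟩, rfl⟩ := hz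
    constructor <;> simp [abs_le] <;> omega
  · rintro ⟨h1, h2⟩
    simp only [box, Finset.mem_image, Finset.mem_product, Finset.mem_Icc]
    refine ⟨(z.re, z.im), ?_, rfl⟩
    rw [abs_le] at h1 h2
    exact ⟨⟨h1.1, h1.2⟩, h2.1, h2.2⟩

lemma card_box (k : ℕ) : (box k).card ≤ (2*k+1)^2 := by
  calc (box k).card ≤ ((Finset.Icc (-(k:ℤ)) k) ×ˢ (Finset.Icc (-(k:ℤ)) k)).card :=
        Finset.card_image_le
    _ = (Finset.Icc (-(k:ℤ)) k).card * (Finset.Icc (-(k:ℤ)) k).card := Finset.card_product _ _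
    _ ≤ (2*k+1) * (2*k+1) := by
        have : (Finset.Icc (-(k:ℤ)) k).card = (2*(k:ℤ)+1).toNat := by rw [Int.card_Icc]; omega
        rw [this]; have : ((2*(k:ℤ)+1)).toNat = 2*k+1 := by omega
        rw [this]
    _ = (2*k+1)^2 := by ring

/-- Gaussian integers of norm exactly `n`. -/
noncomputable def G (n : ℕ) : Finset GaussianInt := (box n).filter fun z => z.norm = (n:ℤ)

lemma mem_G {n : ℕ} {z : GaussianInt} : z ∈ G n ↔ z.norm = (n:ℤ) := by
  simp only [G, Finset.mem_filter, and_iff_right_iff_imp]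
  intro h
  have hre : z.re^2 ≤ (n:ℤ) := by nlinarith [normi z, sq_nonneg z.im]
  have him : z.im^2 ≤ (n:ℤ) := by nlinarith [normi z, sq_nonneg z.re]
  exact mem_box.2 ⟨abs_le_of_sq_le hre, abs_le_of_sq_le him⟩

lemma r2_eq (n : ℕ) : r2 n = (G n).card := by
  have himg : {p : ℤ × ℤ | p.1^2 + p.2^2 = (n : ℤ)} =
      ↑((G n).image fun z => (z.re, z.im)) := by
    ext p
    simp only [Set.mem_setOf_eq, Finset.coe_image, Set.mem_image, Finset.mem_coe]
    constructor
    · intro h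
      refine ⟨⟨p.1, p.2⟩, mem_G.2 ?_, rfl⟩
      rw [normi]; exact h
    · rintro ⟨z, hz, rfl⟩
      have := mem_G.1 hz
      rw [normi] at this
      exact this
  rw [r2, himg, Set.ncard_coe_finset]
  apply Finset.card_image_of_injective
  intro a b hab
  simp only [Prod.mk.injEq] at hab
  exact Zsqrtd.ext hab.1 hab.2

lemma r2_zero : r2 0 = 1 := by
  rw [r2_eq]
  have : G 0 = {0} := by
    ext z
    simp only [mem_G, Finset.mem_singleton, Nat.cast_zero]
    exact GaussianInt.norm_eq_zero
  rw [this, Finset.card_singleton]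

/-- partial sums of r2 over [1, m] are at most 9m -/
lemma sum_card_G_le (m : ℕ) : ∑ n ∈ Finset.Icc 1 m, (G n).card ≤ 9 * m := by
  rcases Nat.eq_zero_or_pos m with rfl | hm
  · simp
  have hdisj : (↑(Finset.Icc 1 m : Finset ℕ) : Set ℕ).PairwiseDisjoint G := by
    intro a _ b _ hab
    simp only [Function.onFun, Finset.disjoint_left]
    intro z hza hzb
    exact hab (by have h1 := mem_G.1 hza; have h2 := mem_G.1 hzb; exact_mod_cast h1.symm.trans h2)
  rw [← Finset.card_biUnion (fun a ha b hb hab => hdisj ha hb hab)]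
  have hsub : (Finset.Icc 1 m).biUnion G ⊆ box (Nat.sqrt m) := by
    intro z hz
    simp only [Finset.mem_biUnion, Finset.mem_Icc] at hz
    obtain ⟨n, ⟨hn1, hn2⟩, hzn⟩ := hz
    have hnorm := mem_G.1 hzn
    have hre : z.re^2 ≤ (m:ℤ) := by
      have : z.re^2 ≤ (n:ℤ) := by nlinarith [normi z, sq_nonneg z.im]
      calc z.re^2 ≤ (n:ℤ) := this
        _ ≤ m := by exact_mod_cast hn2
    have him : z.im^2 ≤ (m:ℤ) := by
      have : z.im^2 ≤ (n:ℤ) := by nlinarith [normi z, sq_nonneg z.re]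
      calc z.im^2 ≤ (n:ℤ) := this
        _ ≤ m := by exact_mod_cast hn2
    apply mem_box.2
    constructor
    · have : z.re.natAbs * z.re.natAbs ≤ m := by
        have : (↑(z.re.natAbs * z.re.natAbs) : ℤ) ≤ m := by
          push_cast [Int.natAbs_mul_self']
          rw [abs_mul_abs_self]; nlinarith [hre]
        exact_mod_cast this
      have := Nat.le_sqrt.2 this
      calc |z.re| = (z.re.natAbs : ℤ) := (Int.abs_eq_natAbs _)
        _ ≤ (Nat.sqrt m : ℤ) := by exact_mod_cast this
    · have : z.im.natAbs * z.im.natAbs ≤ m := by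
        have : (↑(z.im.natAbs * z.im.natAbs) : ℤ) ≤ m := by
          push_cast [Int.natAbs_mul_self']
          rw [abs_mul_abs_self]; nlinarith [him]
        exact_mod_cast this
      have := Nat.le_sqrt.2 this
      calc |z.im| = (z.im.natAbs : ℤ) := (Int.abs_eq_natAbs _)
        _ ≤ (Nat.sqrt m : ℤ) := by exact_mod_cast this
  calc ((Finset.Icc 1 m).biUnion G).card ≤ (box (Nat.sqrt m)).card := Finset.card_le_card hsub
    _ ≤ (2 * Nat.sqrt m + 1)^2 := card_box _
    _ ≤ 9 * m := by
        have h1 : 1 ≤ Nat.sqrt m := Nat.sqrt_pos.2 hm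
        have h2 : Nat.sqrt m ^ 2 ≤ m := Nat.sqrt_le' m
        nlinarith [h1, h2]

/-- Gaussian integers with norm in [1, k]. -/
noncomputable def T (k : ℕ) : Finset GaussianInt := (Finset.Icc 1 k).biUnion G

lemma card_T_le (k : ℕ) : (T k).card ≤ 9 * k :=
  le_trans (Finset.card_biUnion_le) (sum_card_G_le k)

lemma mem_T {k : ℕ} {z : GaussianInt} : z ∈ T k ↔ z ≠ 0 ∧ z.norm ≤ (k:ℤ) := by
  simp only [T, Finset.mem_biUnion, Finset.mem_Icc]
  constructor
  · rintro ⟨n, ⟨hn1, hn2⟩, hz⟩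
    have h := mem_G.1 hz
    refine ⟨?_, by rw [h]; exact_mod_cast hn2⟩
    intro h0
    rw [h0] at h
    simp only [Zsqrtd.norm_zero] at h
    have : n = 0 := by exact_mod_cast h.symm
    omega
  · rintro ⟨h0, hk⟩
    have hpos : 0 < z.norm := GaussianInt.norm_pos.2 h0
    refine ⟨z.norm.toNat, ⟨by omega, by omega⟩, mem_G.2 ?_⟩
    omega


lemma sum_range_r2_le (k : ℕ) : ∑ i ∈ Finset.range (k+1), (r2 i : ℝ) ≤ 1 + 9 * k := by
  have hset : Finset.range (k+1) = insert 0 (Finset.Icc 1 k) := by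
    ext a; simp; omega
  rw [hset, Finset.sum_insert (by simp)]
  have h1 : ∑ i ∈ Finset.Icc 1 k, (r2 i : ℝ) ≤ 9 * k := by
    have := sum_card_G_le k
    calc ∑ i ∈ Finset.Icc 1 k, (r2 i : ℝ)
        = ((∑ i ∈ Finset.Icc 1 k, (G i).card : ℕ) : ℝ) := by
          push_cast; exact Finset.sum_congr rfl fun i _ => by rw [r2_eq]
      _ ≤ ((9 * k : ℕ) : ℝ) := by exact_mod_cast this
      _ = 9 * k := by push_cast; ring
  rw [r2_zero]
  push_cast
  linarith

lemma sum_div_le (m : ℕ) (hm : 2 ≤ m) :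
    ∑ n ∈ Finset.Icc 1 m, (r2 n : ℝ) / n ≤ 45 * Real.log m := by
  have h0m : 0 < m := by omega
  have hIcc : Finset.Icc 1 m = Finset.Ioc 0 m := by ext a; simp; omega
  have habel := Finset.sum_Ioc_by_parts (fun i => ((i:ℝ))⁻¹) (fun i => (r2 i : ℝ)) h0m
  simp only [smul_eq_mul] at habel
  have hsum : ∑ n ∈ Finset.Icc 1 m, (r2 n : ℝ) / n
      = ∑ i ∈ Finset.Ioc 0 m, ((i:ℝ))⁻¹ * (r2 i : ℝ) := by
    rw [hIcc]; exact Finset.sum_congr rfl fun i _ => by rw [div_eq_mul_inv, mul_comm]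
  rw [hsum, habel]
  -- bound the three pieces
  have hterm1 : ((m:ℝ))⁻¹ * (∑ i ∈ Finset.range (m+1), (r2 i : ℝ)) ≤ 10 := by
    have h1 := sum_range_r2_le m
    have hmr : (1:ℝ) ≤ (m:ℝ) := by exact_mod_cast h0m
    rw [inv_mul_le_iff₀ (by linarith)]
    nlinarith
  have hterm2 : (0:ℝ) ≤ ((1:ℕ):ℝ)⁻¹ * (∑ i ∈ Finset.range (0+1), (r2 i : ℝ)) := by
    simp [r2_zero]
  have hterm3 : - ∑ i ∈ Finset.Ioc 0 (m-1),
        ((((i+1:ℕ)):ℝ)⁻¹ - ((i:ℕ):ℝ)⁻¹) * (∑ j ∈ Finset.range (i+1), (r2 j : ℝ))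
      ≤ 10 * (1 + Real.log m) := by
    calc - ∑ i ∈ Finset.Ioc 0 (m-1),
          ((((i+1:ℕ)):ℝ)⁻¹ - ((i:ℕ):ℝ)⁻¹) * (∑ j ∈ Finset.range (i+1), (r2 j : ℝ))
        = ∑ i ∈ Finset.Ioc 0 (m-1),
          (((i:ℕ):ℝ)⁻¹ - (((i+1:ℕ)):ℝ)⁻¹) * (∑ j ∈ Finset.range (i+1), (r2 j : ℝ)) := by
          rw [← Finset.sum_neg_distrib]; exact Finset.sum_congr rfl fun i _ => by ring
      _ ≤ ∑ i ∈ Finset.Ioc 0 (m-1), 10 * (((i+1:ℕ)):ℝ)⁻¹ := by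
          apply Finset.sum_le_sum
          intro i hi
          have hi1 : 1 ≤ i := by simp at hi; omega
          have hir : (1:ℝ) ≤ (i:ℝ) := by exact_mod_cast hi1
          have hG := sum_range_r2_le i
          have hGpos : (0:ℝ) ≤ ∑ j ∈ Finset.range (i+1), (r2 j : ℝ) :=
            Finset.sum_nonneg fun j _ => by positivity
          have hdiff : (((i:ℕ):ℝ)⁻¹ - (((i+1:ℕ)):ℝ)⁻¹) = ((i:ℝ) * ((i:ℝ)+1))⁻¹ := by
            push_cast
            rw [mul_inv]
            field_simp
            ring
          rw [hdiff]
          have h10 : (∑ j ∈ Finset.range (i+1), (r2 j : ℝ)) ≤ 10 * i := by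
            push_cast at hG ⊢; nlinarith
          calc ((i:ℝ) * ((i:ℝ)+1))⁻¹ * (∑ j ∈ Finset.range (i+1), (r2 j : ℝ))
              ≤ ((i:ℝ) * ((i:ℝ)+1))⁻¹ * (10 * i) := by
                apply mul_le_mul_of_nonneg_left h10 (by positivity)
            _ = 10 * ((i:ℝ)+1)⁻¹ := by field_simp
            _ = 10 * (((i+1:ℕ)):ℝ)⁻¹ := by push_cast; ring
      _ = 10 * ∑ i ∈ Finset.Ioc 0 (m-1), (((i+1:ℕ)):ℝ)⁻¹ := by rw [Finset.mul_sum]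
      _ ≤ 10 * (1 + Real.log m) := by
          have hre : ∑ i ∈ Finset.Ioc 0 (m-1), (((i+1:ℕ)):ℝ)⁻¹
              = ∑ j ∈ Finset.Ioc 1 m, ((j:ℕ):ℝ)⁻¹ := by
            refine Finset.sum_nbij' (fun i => i + 1) (fun j => j - 1) ?_ ?_ ?_ ?_ ?_
            · intro a ha; simp only [Finset.mem_Ioc] at ha ⊢; omega
            · intro a ha; simp only [Finset.mem_Ioc] at ha ⊢; omega
            · intro a ha; show a + 1 - 1 = a; omega
            · intro a ha; simp only [Finset.mem_Ioc] at ha; show a - 1 + 1 = a; omega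
            · intro a ha; rfl
          rw [hre]
          have hsub : ∑ j ∈ Finset.Ioc 1 m, ((j:ℕ):ℝ)⁻¹ ≤ ∑ j ∈ Finset.Icc 1 m, ((j:ℕ):ℝ)⁻¹ := by
            apply Finset.sum_le_sum_of_subset_of_nonneg
            · intro a ha; simp at ha ⊢; omega
            · intro a _ _; positivity
          have hharm : ∑ j ∈ Finset.Icc 1 m, ((j:ℕ):ℝ)⁻¹ ≤ 1 + Real.log m := by
            have h1 := harmonic_le_one_add_log m
            have h2 : (harmonic m : ℝ) = ∑ j ∈ Finset.Icc 1 m, ((j:ℕ):ℝ)⁻¹ := by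
              rw [harmonic_eq_sum_Icc]; push_cast; rfl
            linarith [h2 ▸ h1]
          nlinarith
  have hlog2 : (0.6931471803 : ℝ) < Real.log 2 := Real.log_two_gt_d9
  have hlogm : Real.log 2 ≤ Real.log m := by
    apply Real.log_le_log (by norm_num)
    exact_mod_cast hm
  nlinarith [hterm1, hterm2, hterm3]


def U : Finset GaussianInt := {1, -1, ⟨0,1⟩, ⟨0,-1⟩}

lemma card_U : U.card ≤ 4 := by decide

lemma exists_unit {c : GaussianInt} (h : c.norm = 1) : ∃ c' ∈ U, c * c' = 1 := by
  obtain ⟨a, b⟩ := c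
  simp only [Zsqrtd.norm_def] at h
  have ha1 : a ≤ 1 := by nlinarith [sq_nonneg (a-1), sq_nonneg b]
  have ha2 : -1 ≤ a := by nlinarith [sq_nonneg (a+1), sq_nonneg b]
  have hb1 : b ≤ 1 := by nlinarith [sq_nonneg (b-1), sq_nonneg a]
  have hb2 : -1 ≤ b := by nlinarith [sq_nonneg (b+1), sq_nonneg a]
  interval_cases a <;> interval_cases b <;> simp_all <;> decide


noncomputable def D (m : ℕ) : Finset (GaussianInt × GaussianInt) :=
  (T m ×ˢ T m).filter fun p => p.1.norm * p.2.norm ≤ (m:ℤ)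

lemma norm_one_le {z : GaussianInt} (hz : z ≠ 0) : 1 ≤ z.norm := GaussianInt.norm_pos.2 hz

lemma card_D_le (m : ℕ) (hm : 2 ≤ m) : ((D m).card : ℝ) ≤ 405 * m * Real.log m := by
  have hsub : D m ⊆ (Finset.Icc 1 m).biUnion (fun a => (G a) ×ˢ (T (m / a))) := by
    rintro ⟨g, t⟩ hgt
    simp only [D, Finset.mem_filter, Finset.mem_product] at hgt
    obtain ⟨⟨hgT, htT⟩, hprod⟩ := hgt
    have hg0 := (mem_T.1 hgT).1
    have ht0 := (mem_T.1 htT).1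
    have hg1 := norm_one_le hg0
    have ht1 := norm_one_le ht0
    set a : ℕ := g.norm.toNat with ha
    have hga : g.norm = (a:ℤ) := by omega
    have ham : (a:ℤ) ≤ m := by
      have : g.norm ≤ g.norm * t.norm := le_mul_of_one_le_right (by omega) ht1
      omega
    have ha1 : 1 ≤ a := by omega
    simp only [Finset.mem_biUnion, Finset.mem_Icc, Finset.mem_product]
    refine ⟨a, ⟨ha1, by exact_mod_cast ham⟩, mem_G.2 hga, mem_T.2 ⟨ht0, ?_⟩⟩
    -- t.norm ≤ (m / a : ℕ)
    have htm : t.norm.toNat ≤ m / a := by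
      rw [Nat.le_div_iff_mul_le (by omega)]
      have : ((t.norm.toNat * a : ℕ) : ℤ) ≤ (m:ℤ) := by
        push_cast
        rw [Int.toNat_of_nonneg (by omega)]
        calc t.norm * (a:ℤ) = g.norm * t.norm := by rw [hga]; ring
          _ ≤ m := hprod
      exact_mod_cast this
    omega
  have hcard : (D m).card ≤ ∑ a ∈ Finset.Icc 1 m, (G a).card * (T (m / a)).card := by
    calc (D m).card ≤ ((Finset.Icc 1 m).biUnion (fun a => (G a) ×ˢ (T (m / a)))).card :=
          Finset.card_le_card hsub
      _ ≤ ∑ a ∈ Finset.Icc 1 m, ((G a) ×ˢ (T (m / a))).card := Finset.card_biUnion_le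
      _ = ∑ a ∈ Finset.Icc 1 m, (G a).card * (T (m / a)).card := by
          exact Finset.sum_congr rfl fun a _ => Finset.card_product _ _
  have hreal : ((D m).card : ℝ) ≤ ∑ a ∈ Finset.Icc 1 m, (r2 a : ℝ) * (9 * ((m:ℝ) / a)) := by
    calc ((D m).card : ℝ) ≤ ((∑ a ∈ Finset.Icc 1 m, (G a).card * (T (m / a)).card : ℕ) : ℝ) := by
          exact_mod_cast hcard
      _ = ∑ a ∈ Finset.Icc 1 m, ((G a).card : ℝ) * ((T (m / a)).card : ℝ) := by push_cast; rfl
      _ ≤ ∑ a ∈ Finset.Icc 1 m, (r2 a : ℝ) * (9 * ((m:ℝ) / a)) := by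
          apply Finset.sum_le_sum
          intro a ha
          rw [← r2_eq]
          apply mul_le_mul_of_nonneg_left _ (by positivity)
          calc ((T (m / a)).card : ℝ) ≤ ((9 * (m / a : ℕ) : ℕ) : ℝ) := by
                exact_mod_cast card_T_le (m / a)
            _ = 9 * ((m / a : ℕ) : ℝ) := by push_cast; ring
            _ ≤ 9 * ((m:ℝ) / a) := by
                have := Nat.cast_div_le (m := m) (n := a) (α := ℝ)
                linarith
  calc ((D m).card : ℝ) ≤ ∑ a ∈ Finset.Icc 1 m, (r2 a : ℝ) * (9 * ((m:ℝ) / a)) := hreal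
    _ = 9 * m * ∑ a ∈ Finset.Icc 1 m, (r2 a : ℝ) / a := by
        rw [Finset.mul_sum]
        exact Finset.sum_congr rfl fun a _ => by ring
    _ ≤ 9 * m * (45 * Real.log m) := by
        apply mul_le_mul_of_nonneg_left (sum_div_le m hm) (by positivity)
    _ = 405 * m * Real.log m := by ring

noncomputable def P (m : ℕ) : Finset (GaussianInt × GaussianInt) :=
  (Finset.Icc 1 m).biUnion fun n => (G n) ×ˢ (G n)

lemma sum_sq_eq (m : ℕ) : ∑ n ∈ Finset.Icc 1 m, (r2 n)^2 = (P m).card := by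
  rw [P, Finset.card_biUnion]
  · exact Finset.sum_congr rfl fun n _ => by
      rw [Finset.card_product, r2_eq, sq]
  · intro a _ b _ hab
    simp only [Finset.disjoint_left]
    rintro ⟨z, w⟩ hza hzb
    simp only [Finset.mem_product] at hza hzb
    have h1 := mem_G.1 hza.1
    have h2 := mem_G.1 hzb.1
    exact hab (by exact_mod_cast h1.symm.trans h2)

lemma P_subset (m : ℕ) :
    P m ⊆ U.biUnion fun u => (D m).image fun p => (p.1 * p.2, u * p.1 * star p.2) := by
  rintro ⟨z, w⟩ hzw
  simp only [P, Finset.mem_biUnion, Finset.mem_Icc, Finset.mem_product] at hzw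
  obtain ⟨n, ⟨hn1, hn2⟩, hz, hw⟩ := hzw
  have hzn := mem_G.1 hz
  have hwn := mem_G.1 hw
  have hz0 : z ≠ 0 := by
    intro h; rw [h] at hzn; simp only [Zsqrtd.norm_zero] at hzn
    have : n = 0 := by exact_mod_cast hzn.symm
    omega
  have hw0 : w ≠ 0 := by
    intro h; rw [h] at hwn; simp only [Zsqrtd.norm_zero] at hwn
    have : n = 0 := by exact_mod_cast hwn.symm
    omega
  -- gcd decomposition
  set g : GaussianInt := EuclideanDomain.gcd z w with hgdef
  have hgz : g ∣ z := EuclideanDomain.gcd_dvd_left z w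
  have hgw : g ∣ w := EuclideanDomain.gcd_dvd_right z w
  obtain ⟨z₁, hz₁⟩ := hgz
  obtain ⟨w₁, hw₁⟩ := hgw
  have hg0 : g ≠ 0 := by
    intro h
    rw [EuclideanDomain.gcd_eq_zero_iff] at h
    exact hz0 h.1
  -- coprimality via Bezout
  have hbezout := EuclideanDomain.gcd_eq_gcd_ab z w
  have hcop : IsCoprime z₁ w₁ := by
    refine ⟨EuclideanDomain.gcdA z w, EuclideanDomain.gcdB z w, ?_⟩
    have : g * 1 = g * (EuclideanDomain.gcdA z w * z₁ + EuclideanDomain.gcdB z w * w₁) := by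
      rw [mul_one]
      calc g = z * EuclideanDomain.gcdA z w + w * EuclideanDomain.gcdB z w := hbezout
        _ = g * (EuclideanDomain.gcdA z w * z₁ + EuclideanDomain.gcdB z w * w₁) := by
            rw [hz₁, hw₁]; ring
    exact (mul_left_cancel₀ hg0 this).symm
  -- norms
  have hnormz : z.norm = g.norm * z₁.norm := by rw [hz₁, Zsqrtd.norm_mul]
  have hnormw : w.norm = g.norm * w₁.norm := by rw [hw₁, Zsqrtd.norm_mul]
  have hgnorm0 : g.norm ≠ 0 := fun h => hg0 (GaussianInt.norm_eq_zero.1 h)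
  have hn_eq : z₁.norm = w₁.norm := by
    apply mul_left_cancel₀ hgnorm0
    rw [← hnormz, ← hnormw, hzn, hwn]
  -- w₁ divides star z₁
  have hdvd : w₁ ∣ z₁ * star z₁ :=
    ⟨star w₁, by rw [← Zsqrtd.norm_eq_mul_conj, hn_eq, Zsqrtd.norm_eq_mul_conj]⟩
  have hdvd2 : w₁ ∣ star z₁ := (hcop.symm).dvd_of_dvd_mul_left hdvd
  obtain ⟨c, hc⟩ := hdvd2
  have hw10 : w₁.norm ≠ 0 := by
    intro h
    apply hw0
    rw [hw₁, GaussianInt.norm_eq_zero.1 h, mul_zero]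
  have hcnorm : c.norm = 1 := by
    have h1 : z₁.norm = w₁.norm * c.norm := by
      rw [← Zsqrtd.norm_conj z₁, hc, Zsqrtd.norm_mul]
    apply mul_left_cancel₀ hw10
    rw [mul_one, ← h1, hn_eq]
  obtain ⟨c', hc'U, hcc'⟩ := exists_unit hcnorm
  have hw₁' : w₁ = star z₁ * c' := by
    calc w₁ = w₁ * (c * c') := by rw [hcc', mul_one]
      _ = (w₁ * c) * c' := by ring
      _ = star z₁ * c' := by rw [← hc]
  -- membership
  have hz10 : z₁ ≠ 0 := by
    intro h
    apply hz0
    rw [hz₁, h, mul_zero]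
  have hprod : g.norm * z₁.norm = (n:ℤ) := by rw [← hnormz, hzn]
  have hg1 : 1 ≤ g.norm := GaussianInt.norm_pos.2 hg0
  have hz11 : 1 ≤ z₁.norm := GaussianInt.norm_pos.2 hz10
  refine Finset.mem_biUnion.2 ⟨c', hc'U, Finset.mem_image.2 ⟨(g, z₁), ?_, ?_⟩⟩
  · simp only [D, Finset.mem_filter, Finset.mem_product]
    have hnm : (n:ℤ) ≤ (m:ℤ) := by exact_mod_cast hn2
    refine ⟨⟨mem_T.2 ⟨hg0, ?_⟩, mem_T.2 ⟨hz10, ?_⟩⟩, by rw [hprod]; exact hnm⟩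
    · nlinarith
    · nlinarith
  · have h2 : c' * g * star z₁ = w := by
      rw [hw₁, hw₁']; ring
    simp only [Prod.mk.injEq]
    exact ⟨hz₁.symm, h2⟩

lemma card_P_le (m : ℕ) : (P m).card ≤ 4 * (D m).card := by
  calc (P m).card
      ≤ (U.biUnion fun u => (D m).image fun p => (p.1 * p.2, u * p.1 * star p.2)).card :=
        Finset.card_le_card (P_subset m)
    _ ≤ ∑ u ∈ U, ((D m).image fun p => (p.1 * p.2, u * p.1 * star p.2)).card :=
        Finset.card_biUnion_le
    _ ≤ ∑ _u ∈ U, (D m).card := Finset.sum_le_sum fun u _ => Finset.card_image_le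
    _ = U.card * (D m).card := by rw [Finset.sum_const, smul_eq_mul]
    _ ≤ 4 * (D m).card := Nat.mul_le_mul_right _ card_U

theorem final_bound (x : ℝ) (hx : 2 ≤ x) :
    ∑ n ∈ Finset.Icc 1 ⌊x⌋₊, (r2 n : ℝ)^2 ≤ 1620 * x * Real.log x := by
  set m := ⌊x⌋₊ with hmdef
  have hm2 : 2 ≤ m := Nat.le_floor (by exact_mod_cast hx)
  have hxm : (m:ℝ) ≤ x := Nat.floor_le (by linarith)
  have hm0 : (0:ℝ) < m := by
    have : (2:ℝ) ≤ (m:ℝ) := by exact_mod_cast hm2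
    linarith
  calc ∑ n ∈ Finset.Icc 1 m, (r2 n : ℝ)^2
      = ((∑ n ∈ Finset.Icc 1 m, (r2 n)^2 : ℕ) : ℝ) := by push_cast; rfl
    _ = ((P m).card : ℝ) := by rw [sum_sq_eq]
    _ ≤ 4 * ((D m).card : ℝ) := by exact_mod_cast card_P_le m
    _ ≤ 4 * (405 * m * Real.log m) := by
        have := card_D_le m hm2
        linarith
    _ = 1620 * m * Real.log m := by ring
    _ ≤ 1620 * x * Real.log x := by
        have hlog : Real.log m ≤ Real.log x := Real.log_le_log hm0 hxm
        have hlogm0 : (0:ℝ) ≤ Real.log m := by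
          apply Real.log_nonneg
          have : (2:ℝ) ≤ (m:ℝ) := by exact_mod_cast hm2
          linarith
        nlinarith


end R2Aux

theorem sum_r2_sq_bound :
    ∃ C : ℝ, C > 0 ∧ ∀ x : ℝ, 2 ≤ x →
      ∑ n ∈ Finset.Icc 1 ⌊x⌋₊, (r2 n : ℝ)^2 ≤ C * x * Real.log x := by
  exact ⟨1620, by norm_num, fun x hx => R2Aux.final_bound x hx⟩
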